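/- Let H be a connected N^l-graded Hopf algebra and φ, ψ characters (multiplicative unital linear functionals) on H. If C is a graded subcoalgebra of H such that (φ - ψ) vanishes on all elements of C of degree n with n ≤ k, then the subalgebra generated by C has the same property; in particular, the largest such graded subcoalgebra S_k(φ,ψ) is closed under multiplication (using (φ-ψ)(xy) = (φ-ψ)(x)φ(y) + ψ(x)(φ-ψ)(y)). -/

import Mathlib

open TensorProduct
set_option maxHeartbeats 1000000
set_option synthInstance.maxHeartbeats 400000

/-- `ℬ` is a connected `ℕ^l`-grading of `H`. -/
def IsConnectedGraded {l : ℕ} {H : Type*} [Ring H] [Bialgebra ℚ H]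
    (ℬ : (Fin l → ℕ) → Submodule ℚ H) : Prop :=
  DirectSum.IsInternal ℬ ∧
  ℬ 0 = Submodule.span ℚ {(1 : H)} ∧
  (∀ i j : Fin l → ℕ, ∀ a ∈ ℬ i, ∀ b ∈ ℬ j, a * b ∈ ℬ (i + j)) ∧
  (∀ n : Fin l → ℕ, ∀ h ∈ ℬ n,
    Coalgebra.comul (R := ℚ) h ∈
      ⨆ (i : Fin l → ℕ) (j : Fin l → ℕ) (_ : i + j = n),
        LinearMap.range (TensorProduct.map (ℬ i).subtype (ℬ j).subtype)) ∧
  (∀ n : Fin l → ℕ, n ≠ 0 → ∀ h ∈ ℬ n, Coalgebra.counit (R := ℚ) h = 0)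

/-- Let `H` be a connected `ℕ^l`-graded Hopf algebra, `φ, ψ` characters on `H`
and `k ∈ (ℕ ∪ {∞})^l`.  If `C` is a graded subcoalgebra of `H` such that
`φ - ψ` vanishes on all elements of `C` of degree `n` with `n ≤ k`, then the
subalgebra generated by `C` has the same property (in particular the largest
such graded subcoalgebra `S_k(φ,ψ)` is closed under multiplication). -/
theorem subalgebra_generated_vanishing {l : ℕ} {H : Type*} [Ring H]
    [HopfAlgebra ℚ H]
    (ℬ : (Fin l → ℕ) → Submodule ℚ H) (hgr : IsConnectedGraded ℬ)
    (k : Fin l → ℕ∞) (φ ψ : H →ₐ[ℚ] ℚ) (C : Submodule ℚ H)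
    (hCgraded : C ≤ ⨆ n : Fin l → ℕ, C ⊓ ℬ n)
    (hCsubcoalg : ∀ h ∈ C, Coalgebra.comul (R := ℚ) h ∈
      LinearMap.range (TensorProduct.map C.subtype C.subtype))
    (hCvanish : ∀ n : Fin l → ℕ, (∀ i, (n i : ℕ∞) ≤ k i) →
      ∀ h ∈ C ⊓ ℬ n, φ h = ψ h) :
    ∀ n : Fin l → ℕ, (∀ i, (n i : ℕ∞) ≤ k i) →
      ∀ h ∈ Subalgebra.toSubmodule (Algebra.adjoin ℚ (C : Set H)) ⊓ ℬ n,
        φ h = ψ h := by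
  classical
  obtain ⟨hint, hone, hmul, -, -⟩ := hgr
  letI : SetLike.GradedMonoid ℬ :=
    { one_mem := by rw [hone]; exact Submodule.mem_span_singleton_self 1
      mul_mem := fun {i j a b} ha hb => hmul i j a ha b hb }
  letI : DirectSum.Decomposition ℬ := hint.chooseDecomposition
  letI : GradedRing ℬ := {}
  -- the key claim, proved by adjoin induction
  have key : ∀ x ∈ Algebra.adjoin ℚ (C : Set H), ∀ n : Fin l → ℕ,
      (∀ i, (n i : ℕ∞) ≤ k i) →
      φ ((DirectSum.decompose ℬ x n : H)) = ψ ((DirectSum.decompose ℬ x n : H)) := by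
    intro x hx
    induction hx using Algebra.adjoin_induction with
    | mem c hc =>
      -- components of c lie in C ⊓ ℬ n
      have hcomp : ∀ n : Fin l → ℕ, (DirectSum.decompose ℬ c n : H) ∈ C ⊓ ℬ n := by
        have : c ∈ ⨆ n : Fin l → ℕ, C ⊓ ℬ n := hCgraded hc
        refine Submodule.iSup_induction _ (motive := fun c => ∀ n : Fin l → ℕ,
          (DirectSum.decompose ℬ c n : H) ∈ C ⊓ ℬ n) this ?_ ?_ ?_
        · intro m y hy n
          have hyB : y ∈ ℬ m := hy.2
          by_cases hnm : n = m
          · subst hnm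
            rw [DirectSum.decompose_of_mem_same ℬ hyB]
            exact hy
          · rw [DirectSum.decompose_of_mem_ne ℬ hyB (fun e => hnm e.symm)]
            exact Submodule.zero_mem _
        · intro n; simp only [DirectSum.decompose_zero, DirectSum.zero_apply, ZeroMemClass.coe_zero]
          exact Submodule.zero_mem _
        · intro y z hy hz n
          simpa only [DirectSum.decompose_add, DirectSum.add_apply, Submodule.coe_add] using
            Submodule.add_mem _ (hy n) (hz n)
      intro n hn
      exact hCvanish n hn _ (hcomp n)
    | algebraMap r =>
      intro n hn
      have : (algebraMap ℚ H) r = r • (1 : H) := by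
        rw [Algebra.algebraMap_eq_smul_one]
      rw [this, DirectSum.decompose_smul]
      simp only [DirectSum.smul_apply, SetLike.val_smul, map_smul]
      by_cases hn0 : n = 0
      · subst hn0
        rw [DirectSum.decompose_of_mem_same ℬ (SetLike.one_mem_graded ℬ)]
        simp
      · rw [DirectSum.decompose_of_mem_ne ℬ (SetLike.one_mem_graded ℬ)
          (fun e => hn0 e.symm)]
        simp
    | add x y hx hy ihx ihy =>
      intro n hn
      simp only [DirectSum.decompose_add, DirectSum.add_apply, Submodule.coe_add, map_add, ihx n hn, ihy n hn]
    | mul x y hx hy ihx ihy =>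
      intro n hn
      rw [DirectSum.decompose_mul, DirectSum.coe_mul_apply]
      rw [map_sum, map_sum]
      refine Finset.sum_congr rfl ?_
      rintro ⟨i, j⟩ hij
      simp only [Finset.mem_filter, Finset.mem_product] at hij
      obtain ⟨-, hijn⟩ := hij
      have hik : ∀ t, (i t : ℕ∞) ≤ k t := by
        intro t
        refine le_trans ?_ (hn t)
        exact_mod_cast (by
          have : i t ≤ n t := by
            rw [← hijn]; exact Nat.le_add_right _ _
          exact_mod_cast this : (i t : ℕ∞) ≤ (n t : ℕ∞))
      have hjk : ∀ t, (j t : ℕ∞) ≤ k t := by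
        intro t
        refine le_trans ?_ (hn t)
        exact_mod_cast (by
          have : j t ≤ n t := by
            rw [← hijn]; exact Nat.le_add_left _ _
          exact_mod_cast this : (j t : ℕ∞) ≤ (n t : ℕ∞))
      have h1 := ihx i hik
      have h2 := ihy j hjk
      rw [map_mul, map_mul, h1, h2]
  intro n hn h hh
  obtain ⟨hadj, hB⟩ := hh
  have := key h hadj n hn
  rwa [DirectSum.decompose_of_mem_same ℬ hB] at this
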